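/- In GL(3, ZMod 2), the subgroup generated by the matrices ρ_v(0, 0) and ρ_f(0, 0) (the cube specialized to 𝔽₂; both matrices are invertible) is isomorphic to the symmetric group Equiv.Perm (Fin 3). -/
import Mathlib


open Matrix

/-- Grothendieck's universal rotation `ρ_v` about a vertex, with `x = cos θ`, `y = cos γ`. -/
def rhoV {R : Type*} [CommRing R] (x y : R) : Matrix (Fin 3) (Fin 3) R :=
  !![1, 1 - x, (1 - x) * (1 - y); 0, -1, -1 + y; 0, 1 + x, -1 + (1 + x) * (1 - y)]

/-- Grothendieck's universal rotation `ρ_f` about a face, with `x = cos θ`, `y = cos γ`. -/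
def rhoF {R : Type*} [CommRing R] (x y : R) : Matrix (Fin 3) (Fin 3) R :=
  !![-1, -1 + x, 0; 2, 1 - 2 * x, 0; 0, 1 + x, 1]

/-- Conjugated permutation matrix over `𝔽₂`. -/
def fmat (σ : Equiv.Perm (Fin 3)) : Matrix (Fin 3) (Fin 3) (ZMod 2) :=
  !![0,0,1;0,1,1;1,1,0] * (Matrix.of fun i j => if σ j = i then (1 : ZMod 2) else 0)
    * !![1,1,1;1,1,0;1,0,0]

lemma fmat_mul : ∀ σ τ : Equiv.Perm (Fin 3), fmat (σ * τ) = fmat σ * fmat τ := by decide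

lemma fmat_one : fmat 1 = 1 := by decide

lemma fmat_inv : ∀ σ : Equiv.Perm (Fin 3), fmat σ * fmat σ⁻¹ = 1 := by decide

lemma fmat_inv' : ∀ σ : Equiv.Perm (Fin 3), fmat σ⁻¹ * fmat σ = 1 := by decide

lemma fmat_inj : ∀ σ τ : Equiv.Perm (Fin 3), fmat σ = fmat τ → σ = τ := by decide

/-- The representation `Perm (Fin 3) →* GL (Fin 3) (ZMod 2)`. -/
def permToGL : Equiv.Perm (Fin 3) →* GL (Fin 3) (ZMod 2) where
  toFun σ := ⟨fmat σ, fmat σ⁻¹, fmat_inv σ, fmat_inv' σ⟩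
  map_one' := Units.ext (by simpa using fmat_one)
  map_mul' σ τ := Units.ext (by simpa using fmat_mul σ τ)

def cPerm : Equiv.Perm (Fin 3) := ⟨![2, 0, 1], ![1, 2, 0], by decide, by decide⟩
def tPerm : Equiv.Perm (Fin 3) := ⟨![0, 2, 1], ![0, 2, 1], by decide, by decide⟩

lemma closure_ct : Subgroup.closure {cPerm, tPerm} = ⊤ := by
  rw [Subgroup.eq_top_iff']
  intro g
  have hc : cPerm ∈ Subgroup.closure {cPerm, tPerm} :=
    Subgroup.subset_closure (Set.mem_insert _ _)
  have ht : tPerm ∈ Subgroup.closure {cPerm, tPerm} :=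
    Subgroup.subset_closure (Set.mem_insert_of_mem _ rfl)
  have h6 : ∀ g : Equiv.Perm (Fin 3),
      g = 1 ∨ g = cPerm ∨ g = cPerm * cPerm ∨ g = tPerm ∨ g = cPerm * tPerm ∨
        g = cPerm * cPerm * tPerm := by decide
  rcases h6 g with h | h | h | h | h | h <;> subst h
  · exact Subgroup.one_mem _
  · exact hc
  · exact Subgroup.mul_mem _ hc hc
  · exact ht
  · exact Subgroup.mul_mem _ hc ht
  · exact Subgroup.mul_mem _ (Subgroup.mul_mem _ hc hc) ht

/-- The cube (`cos θ = 0`, `cos γ = 0`) specialized to `𝔽₂` degenerates: its automorphism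
group becomes `S₃`. -/
theorem cube_mod_two
    (A B : GL (Fin 3) (ZMod 2))
    (hA : (A : Matrix (Fin 3) (Fin 3) (ZMod 2)) = rhoV 0 0)
    (hB : (B : Matrix (Fin 3) (Fin 3) (ZMod 2)) = rhoF 0 0) :
    Nonempty (Subgroup.closure {A, B} ≃* Equiv.Perm (Fin 3)) := by
  have hinj : Function.Injective permToGL := by
    intro σ τ h
    exact fmat_inj σ τ (congrArg Units.val h)
  have hc : permToGL cPerm = A := by
    apply Units.ext
    rw [hA]
    show fmat cPerm = rhoV 0 0
    decide
  have ht : permToGL tPerm = B := by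
    apply Units.ext
    rw [hB]
    show fmat tPerm = rhoF 0 0
    decide
  have hrange : permToGL.range = Subgroup.closure {A, B} := by
    rw [MonoidHom.range_eq_map, ← closure_ct, MonoidHom.map_closure, Set.image_pair, hc, ht]
  exact ⟨(MulEquiv.subgroupCongr hrange.symm).trans (MonoidHom.ofInjective hinj).symm⟩
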